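/- In a cubical set with connections, for a singular n-cube τ, β ∈ {+,−}, and 2 ≤ t ≤ n: ∂_{n+1} Γ_t^β(τ) + Γ_t^β ∂_n(τ) = Γ_{t-1}^β Σ_{i=1}^{t-1} (-1)^i (f_i^- − f_i^+)(τ) + Γ_t^β Σ_{i=1}^{t} (-1)^i (f_i^- − f_i^+)(τ). -/

import Mathlib

structure PrecubicalConn where
  K : ℕ → Type*
  face : Bool → ∀ n : ℕ, ℕ → K (n + 1) → K n
  degen : ∀ n : ℕ, ℕ → K n → K (n + 1)
  conn : Bool → ∀ n : ℕ, ℕ → K n → K (n + 1)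

/-- The axioms of a cubical set with connections (`true` stands for `+`, `false` for `-`;
indices are 1-based with explicit range guards). -/
structure CubicalConnAxioms (P : PrecubicalConn) : Prop where
  face_face : ∀ (α β : Bool) (n i j : ℕ) (σ : P.K (n + 2)), 1 ≤ i → i < j → j ≤ n + 2 →
    P.face α n i (P.face β (n + 1) j σ) = P.face β n (j - 1) (P.face α (n + 1) i σ)
  degen_degen : ∀ (n i j : ℕ) (σ : P.K n), 1 ≤ i → i ≤ j → j ≤ n + 1 →
    P.degen (n + 1) i (P.degen n j σ) = P.degen (n + 1) (j + 1) (P.degen n i σ)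
  face_degen_lt : ∀ (α : Bool) (n i j : ℕ) (σ : P.K (n + 1)), 1 ≤ i → i < j → j ≤ n + 2 →
    P.face α (n + 1) i (P.degen (n + 1) j σ) = P.degen n (j - 1) (P.face α n i σ)
  face_degen_gt : ∀ (α : Bool) (n i j : ℕ) (σ : P.K (n + 1)), 1 ≤ j → j < i → i ≤ n + 2 →
    P.face α (n + 1) i (P.degen (n + 1) j σ) = P.degen n j (P.face α n (i - 1) σ)
  face_degen_eq : ∀ (α : Bool) (n i : ℕ) (σ : P.K n), 1 ≤ i → i ≤ n + 1 →
    P.face α n i (P.degen n i σ) = σ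
  conn_conn : ∀ (α β : Bool) (n i j : ℕ) (σ : P.K n), 1 ≤ i → i ≤ j → j ≤ n →
    P.conn α (n + 1) i (P.conn β n j σ) = P.conn β (n + 1) (j + 1) (P.conn α n i σ)
  conn_degen_lt : ∀ (α : Bool) (n i j : ℕ) (σ : P.K n), 1 ≤ i → i < j → j ≤ n + 1 →
    P.conn α (n + 1) i (P.degen n j σ) = P.degen (n + 1) (j + 1) (P.conn α n i σ)
  conn_degen_gt : ∀ (α : Bool) (n i j : ℕ) (σ : P.K n), 1 ≤ j → j < i → i ≤ n + 1 →
    P.conn α (n + 1) i (P.degen n j σ) = P.degen (n + 1) j (P.conn α n (i - 1) σ)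
  conn_degen_eq : ∀ (α : Bool) (n i : ℕ) (σ : P.K n), 1 ≤ i → i ≤ n + 1 →
    P.conn α (n + 1) i (P.degen n i σ) = P.degen (n + 1) (i + 1) (P.degen n i σ)
  face_conn_lt : ∀ (α β : Bool) (n i j : ℕ) (σ : P.K (n + 1)), 1 ≤ i → i < j → j ≤ n + 1 →
    P.face α (n + 1) i (P.conn β (n + 1) j σ) = P.conn β n (j - 1) (P.face α n i σ)
  face_conn_gt : ∀ (α β : Bool) (n i j : ℕ) (σ : P.K (n + 1)), 1 ≤ j → j + 1 < i → i ≤ n + 2 →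
    P.face α (n + 1) i (P.conn β (n + 1) j σ) = P.conn β n j (P.face α n (i - 1) σ)
  face_conn_self : ∀ (β : Bool) (n i j : ℕ) (σ : P.K n), 1 ≤ j → j ≤ n → (i = j ∨ i = j + 1) →
    P.face β n i (P.conn β n j σ) = σ
  face_conn_opp : ∀ (α β : Bool) (n i j : ℕ) (σ : P.K (n + 1)), 1 ≤ j → j ≤ n + 1 →
    (i = j ∨ i = j + 1) → α ≠ β →
    P.face α (n + 1) i (P.conn β (n + 1) j σ) = P.degen n j (P.face α n j σ)

/-- A cube is degenerate if it is of the form `ε_i f_i^+ σ`. -/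
def PrecubicalConn.Degenerate (P : PrecubicalConn) : ∀ {n : ℕ}, P.K n → Prop :=
  fun {n} σ =>
    match n, σ with
    | 0, _ => False
    | m + 1, σ => ∃ i : ℕ, 1 ≤ i ∧ i ≤ m + 1 ∧ σ = P.degen m i (P.face true m i σ)

/-- A cube is a connection if it lies in the image of some `Γ_i^β`. -/
def PrecubicalConn.IsConn (P : PrecubicalConn) : ∀ {n : ℕ}, P.K n → Prop :=
  fun {n} σ =>
    match n, σ with
    | 0, _ => False
    | m + 1, σ => ∃ (β : Bool) (i : ℕ) (τ : P.K m), 1 ≤ i ∧ i ≤ m ∧ σ = P.conn β m i τ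

/-- The linear extension of the face map `f_i^α` to the free `R`-module on the cubes. -/
noncomputable def Fmap (P : PrecubicalConn) (R : Type*) [CommRing R] (α : Bool) (n i : ℕ) :
    (P.K (n + 1) →₀ R) →ₗ[R] (P.K n →₀ R) :=
  Finsupp.lmapDomain R R (P.face α n i)

/-- The linear extension of the connection map `Γ_i^β` to the free `R`-module on the cubes. -/
noncomputable def Gmap (P : PrecubicalConn) (R : Type*) [CommRing R] (β : Bool) (n i : ℕ) :
    (P.K n →₀ R) →ₗ[R] (P.K (n + 1) →₀ R) :=
  Finsupp.lmapDomain R R (P.conn β n i)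

/-- The cubical boundary operator `∂ σ = ∑_{i=1}^{n+1} (-1)^i (f_i^- σ - f_i^+ σ)`. -/
noncomputable def bdry (P : PrecubicalConn) (R : Type*) [CommRing R] (n : ℕ) :
    (P.K (n + 1) →₀ R) →ₗ[R] (P.K n →₀ R) :=
  ∑ i ∈ Finset.Icc 1 (n + 1), ((-1 : R) ^ i) • (Fmap P R false n i - Fmap P R true n i)

/-- The submodule generated by the degenerate cubes. -/
noncomputable def degenSub (P : PrecubicalConn) (R : Type*) [CommRing R] (n : ℕ) :
    Submodule R (P.K n →₀ R) :=
  Submodule.span R {x | ∃ σ : P.K n, P.Degenerate σ ∧ x = Finsupp.single σ 1}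

/-- The submodule generated by the connection cubes. -/
noncomputable def connSub (P : PrecubicalConn) (R : Type*) [CommRing R] (n : ℕ) :
    Submodule R (P.K n →₀ R) :=
  Submodule.span R {x | ∃ σ : P.K n, P.IsConn σ ∧ x = Finsupp.single σ 1}

/-- The sign `±1` associated to `β ∈ {+,-}`. -/
def sgn (R : Type*) [CommRing R] (β : Bool) : R := if β then 1 else -1

/-- Shift lemma for sums over `Ioc` in `ℕ`. -/
lemma sum_Ioc_shift {M : Type*} [AddCommMonoid M] (f : ℕ → M) (a b : ℕ) :
    ∑ i ∈ Finset.Ioc (a + 1) (b + 1), f i = ∑ i ∈ Finset.Ioc a b, f (i + 1) := by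
  have h : Finset.Ioc (a + 1) (b + 1) = (Finset.Ioc a b).map ⟨(· + 1), add_left_injective 1⟩ := by
    ext x
    simp only [Finset.mem_Ioc, Finset.mem_map, Function.Embedding.coeFn_mk]
    constructor
    · rintro ⟨h1, h2⟩; exact ⟨x - 1, ⟨by omega, by omega⟩, by omega⟩
    · rintro ⟨y, ⟨hy1, hy2⟩, rfl⟩; omega
  rw [h, Finset.sum_map]; rfl

/-- Icc from 1 is Ioc from 0. -/
lemma Icc_one_eq_Ioc_zero (k : ℕ) : Finset.Icc 1 k = Finset.Ioc 0 k := by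
  rw [← Finset.Icc_add_one_left_eq_Ioc]; rfl

/-- `bdry` applied to a single generator. -/
lemma bdry_single (P : PrecubicalConn) (R : Type*) [CommRing R] (k : ℕ) (σ : P.K (k + 1)) :
    bdry P R k (Finsupp.single σ 1) =
      ∑ i ∈ Finset.Ioc 0 (k + 1), (-1 : R) ^ i •
        (Finsupp.single (P.face false k i σ) (1 : R) - Finsupp.single (P.face true k i σ) 1) := by
  rw [← Icc_one_eq_Ioc_zero]
  simp [bdry, Fmap, LinearMap.coe_sum, Finset.sum_apply, Finsupp.lmapDomain_apply,
    Finsupp.mapDomain_single]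

/-- `Gmap` applied to a single generator. -/
lemma Gmap_single (P : PrecubicalConn) (R : Type*) [CommRing R] (β : Bool) (k i : ℕ)
    (σ : P.K k) :
    Gmap P R β k i (Finsupp.single σ 1) = Finsupp.single (P.conn β k i σ) (1 : R) := by
  simp [Gmap, Finsupp.lmapDomain_apply, Finsupp.mapDomain_single]

/-- Corollary 3.3(ii): for `2 ≤ t ≤ n`, in the non-degenerate chain complex,
`∂ Γ_t^β τ + Γ_t^β ∂ τ
  = Γ_{t-1}^β ∑_{i=1}^{t-1} (-1)^i (f_i^- - f_i^+) τ
    + Γ_t^β ∑_{i=1}^{t} (-1)^i (f_i^- - f_i^+) τ`. -/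
theorem boundary_conn_add_conn_boundary (P : PrecubicalConn) (hP : CubicalConnAxioms P)
    (R : Type*) [CommRing R] (n t : ℕ) (β : Bool) (τ : P.K (n + 1))
    (ht1 : 2 ≤ t) (ht2 : t ≤ n + 1) :
    (bdry P R (n + 1) (Finsupp.single (P.conn β (n + 1) t τ) 1)
        + Gmap P R β n t (bdry P R n (Finsupp.single τ 1)))
      - (Gmap P R β n (t - 1) (∑ i ∈ Finset.Icc 1 (t - 1),
            ((-1 : R) ^ i) • ((Fmap P R false n i - Fmap P R true n i) (Finsupp.single τ 1)))
         + Gmap P R β n t (∑ i ∈ Finset.Icc 1 t,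
            ((-1 : R) ^ i) • ((Fmap P R false n i - Fmap P R true n i) (Finsupp.single τ 1))))
      ∈ degenSub P R (n + 1) := by
  obtain ⟨s, rfl⟩ : ∃ s, t = s + 2 := ⟨t - 2, by omega⟩
  have hsn : s + 1 ≤ n := by omega
  -- abbreviations
  set Γ : P.K (n + 2) := P.conn β (n + 1) (s + 2) τ with hΓ
  -- the two summand families
  set g1 : ℕ → (P.K (n + 1) →₀ R) := fun i => (-1 : R) ^ i •
    (Finsupp.single (P.conn β n (s + 1) (P.face false n i τ)) (1 : R)
      - Finsupp.single (P.conn β n (s + 1) (P.face true n i τ)) 1) with hg1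
  set g2 : ℕ → (P.K (n + 1) →₀ R) := fun i => (-1 : R) ^ i •
    (Finsupp.single (P.conn β n (s + 2) (P.face false n i τ)) (1 : R)
      - Finsupp.single (P.conn β n (s + 2) (P.face true n i τ)) 1) with hg2
  set F : ℕ → (P.K (n + 1) →₀ R) := fun i => (-1 : R) ^ i •
    (Finsupp.single (P.face false (n + 1) i Γ) (1 : R)
      - Finsupp.single (P.face true (n + 1) i Γ) 1) with hF
  -- compute ∂ Γ
  have hbdryΓ : bdry P R (n + 1) (Finsupp.single Γ 1) = ∑ i ∈ Finset.Ioc 0 (n + 2), F i :=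
    bdry_single P R (n + 1) Γ
  -- split the index set
  have hsplit1 : (∑ i ∈ Finset.Ioc 0 (s + 1), F i) + ∑ i ∈ Finset.Ioc (s + 1) (n + 2), F i
      = ∑ i ∈ Finset.Ioc 0 (n + 2), F i :=
    Finset.sum_Ioc_consecutive F (by omega) (by omega)
  have hsplit2 : (∑ i ∈ Finset.Ioc (s + 1) (s + 3), F i)
        + ∑ i ∈ Finset.Ioc (s + 3) (n + 2), F i
      = ∑ i ∈ Finset.Ioc (s + 1) (n + 2), F i :=
    Finset.sum_Ioc_consecutive F (by omega) (by omega)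
  -- head part: faces below the connection
  have hhead : ∑ i ∈ Finset.Ioc 0 (s + 1), F i = ∑ i ∈ Finset.Ioc 0 (s + 1), g1 i := by
    refine Finset.sum_congr rfl fun i hi => ?_
    rw [Finset.mem_Ioc] at hi
    have hf : ∀ α : Bool, P.face α (n + 1) i Γ = P.conn β n (s + 1) (P.face α n i τ) := by
      intro α
      have := hP.face_conn_lt α β n i (s + 2) τ hi.1 (by omega) (by omega)
      simpa using this
    simp only [hF, hg1, hf]
  -- middle part: the two faces at the connection cancel
  have heq : ∀ α : Bool, P.face α (n + 1) (s + 3) Γ = P.face α (n + 1) (s + 2) Γ := by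
    intro α
    by_cases hα : α = β
    · subst hα
      rw [hP.face_conn_self α (n + 1) (s + 3) (s + 2) τ (by omega) (by omega) (Or.inr rfl),
        hP.face_conn_self α (n + 1) (s + 2) (s + 2) τ (by omega) (by omega) (Or.inl rfl)]
    · rw [hP.face_conn_opp α β n (s + 3) (s + 2) τ (by omega) (by omega) (Or.inr rfl) hα,
        hP.face_conn_opp α β n (s + 2) (s + 2) τ (by omega) (by omega) (Or.inl rfl) hα]
  have hmid : (∑ i ∈ Finset.Ioc (s + 1) (s + 3), F i) = 0 := by
    have hset : Finset.Ioc (s + 1) (s + 3) = {s + 2, s + 3} := by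
      ext x
      simp only [Finset.mem_Ioc, Finset.mem_insert, Finset.mem_singleton]
      omega
    have hneg : F (s + 3) = - F (s + 2) := by
      simp only [hF, heq, show s + 3 = (s + 2) + 1 from rfl, pow_succ]
      module
    rw [hset, Finset.sum_insert (by simp), Finset.sum_singleton, hneg, add_neg_cancel]
  -- tail part: faces above the connection
  have htail : ∑ i ∈ Finset.Ioc (s + 3) (n + 2), F i
      = - ∑ j ∈ Finset.Ioc (s + 2) (n + 1), g2 j := by
    rw [show (s + 3) = (s + 2) + 1 from rfl, show (n + 2) = (n + 1) + 1 from rfl,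
      sum_Ioc_shift, ← Finset.sum_neg_distrib]
    refine Finset.sum_congr rfl fun j hj => ?_
    rw [Finset.mem_Ioc] at hj
    have hf : ∀ α : Bool, P.face α (n + 1) (j + 1) Γ = P.conn β n (s + 2) (P.face α n j τ) := by
      intro α
      have := hP.face_conn_gt α β n (j + 1) (s + 2) τ (by omega) (by omega) (by omega)
      simpa using this
    simp only [hF, hg2, hf, pow_succ]
    module
  -- the Γ ∂ term
  have hGbdry : Gmap P R β n (s + 2) (bdry P R n (Finsupp.single τ 1))
      = ∑ j ∈ Finset.Ioc 0 (n + 1), g2 j := by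
    rw [bdry_single, map_sum]
    refine Finset.sum_congr rfl fun j hj => ?_
    rw [map_smul, map_sub, Gmap_single, Gmap_single, hg2]
  -- the first subtracted term
  have hsub1 : Gmap P R β n (s + 2 - 1) (∑ i ∈ Finset.Icc 1 (s + 2 - 1),
        ((-1 : R) ^ i) • ((Fmap P R false n i - Fmap P R true n i) (Finsupp.single τ 1)))
      = ∑ i ∈ Finset.Ioc 0 (s + 1), g1 i := by
    rw [show s + 2 - 1 = s + 1 from rfl, Icc_one_eq_Ioc_zero, map_sum]
    refine Finset.sum_congr rfl fun i hi => ?_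
    rw [map_smul, LinearMap.sub_apply, map_sub]
    simp only [Fmap, Finsupp.lmapDomain_apply, Finsupp.mapDomain_single]
    rw [Gmap_single, Gmap_single, hg1]
  -- the second subtracted term
  have hsub2 : Gmap P R β n (s + 2) (∑ i ∈ Finset.Icc 1 (s + 2),
        ((-1 : R) ^ i) • ((Fmap P R false n i - Fmap P R true n i) (Finsupp.single τ 1)))
      = ∑ i ∈ Finset.Ioc 0 (s + 2), g2 i := by
    rw [Icc_one_eq_Ioc_zero, map_sum]
    refine Finset.sum_congr rfl fun i hi => ?_
    rw [map_smul, LinearMap.sub_apply, map_sub]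
    simp only [Fmap, Finsupp.lmapDomain_apply, Finsupp.mapDomain_single]
    rw [Gmap_single, Gmap_single, hg2]
  -- split the Γ ∂ sum
  have hsplit3 : (∑ j ∈ Finset.Ioc 0 (s + 2), g2 j) + ∑ j ∈ Finset.Ioc (s + 2) (n + 1), g2 j
      = ∑ j ∈ Finset.Ioc 0 (n + 1), g2 j :=
    Finset.sum_Ioc_consecutive g2 (by omega) (by omega)
  -- put everything together: the expression is zero
  have hzero : (bdry P R (n + 1) (Finsupp.single Γ 1)
        + Gmap P R β n (s + 2) (bdry P R n (Finsupp.single τ 1)))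
      - (Gmap P R β n (s + 2 - 1) (∑ i ∈ Finset.Icc 1 (s + 2 - 1),
            ((-1 : R) ^ i) • ((Fmap P R false n i - Fmap P R true n i) (Finsupp.single τ 1)))
         + Gmap P R β n (s + 2) (∑ i ∈ Finset.Icc 1 (s + 2),
            ((-1 : R) ^ i) • ((Fmap P R false n i - Fmap P R true n i) (Finsupp.single τ 1))))
      = 0 := by
    rw [hbdryΓ, hGbdry, hsub1, hsub2, ← hsplit1, ← hsplit2, hmid, htail, hhead, ← hsplit3]
    abel
  rw [hzero]
  exact Submodule.zero_mem _
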